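/- Suppose V = Σ_{i=1}^N V_i is a (not necessarily direct) decomposition into subspaces and every v ∈ V admits a decomposition v = Σ_i v_i with v_i ∈ V_i and Σ_i a(v_i, v_i) ≤ C₀ · a(v, v). Then the smallest eigenvalue of the additive Schwarz operator P = Σ_i P_i (P_i the a-orthogonal projections) satisfies λ_min(P) ≥ 1/C₀. -/

import Mathlib

private lemma a_nonneg {V : Type*} [AddCommGroup V] [Module ℝ V]
    (a : V →ₗ[ℝ] V →ₗ[ℝ] ℝ) (hpos : ∀ v, v ≠ 0 → 0 < a v v) (x : V) : 0 ≤ a x x := by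
  by_cases hx : x = 0
  · simp [hx]
  · exact (hpos x hx).le

private lemma a_cauchy {V : Type*} [AddCommGroup V] [Module ℝ V]
    (a : V →ₗ[ℝ] V →ₗ[ℝ] ℝ) (hsymm : ∀ v w, a v w = a w v)
    (hpos : ∀ v, v ≠ 0 → 0 < a v v) (x y : V) :
    (a x y) ^ 2 ≤ a x x * a y y := by
  by_cases hx : x = 0
  · simp [hx]
  · have hxx : 0 < a x x := hpos x hx
    set t : ℝ := a x y / a x x with ht
    have h0 : 0 ≤ a (y - t • x) (y - t • x) := a_nonneg a hpos _
    have hexp : a (y - t • x) (y - t • x)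
        = a y y - 2 * t * a x y + t ^ 2 * a x x := by
      simp only [map_sub, map_smul, LinearMap.sub_apply, LinearMap.smul_apply, smul_eq_mul,
        hsymm y x]
      ring
    rw [hexp] at h0
    have htx : t * a x x = a x y := by rw [ht]; field_simp
    nlinarith [mul_nonneg h0 hxx.le]

/-- Stable decomposition (Lions' lemma): if every `v` decomposes as `v = Σ v_i`, `v_i ∈ V_i`,
with `Σ a(v_i, v_i) ≤ C₀ a(v, v)`, then every eigenvalue of `P = Σ P_i` is `≥ 1/C₀`. -/
theorem stmt_8 {V : Type*} [AddCommGroup V] [Module ℝ V] [FiniteDimensional ℝ V]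
    (a : V →ₗ[ℝ] V →ₗ[ℝ] ℝ) (hsymm : ∀ v w, a v w = a w v)
    (hpos : ∀ v, v ≠ 0 → 0 < a v v)
    (N : ℕ) (Vi : Fin N → Submodule ℝ V)
    (P : Fin N → (V →ₗ[ℝ] V))
    (hproj : ∀ i v, P i v ∈ Vi i ∧ ∀ w ∈ Vi i, a (P i v) w = a v w)
    (C₀ : ℝ) (hC₀ : 0 < C₀)
    (hstable : ∀ v : V, ∃ f : Fin N → V, (∀ i, f i ∈ Vi i) ∧ v = ∑ i, f i ∧
      ∑ i, a (f i) (f i) ≤ C₀ * a v v) :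
    ∀ μ : ℝ, Module.End.HasEigenvalue (∑ i, P i) μ → 1 / C₀ ≤ μ := by
  intro μ hμ
  obtain ⟨v, hv⟩ := hμ.exists_hasEigenvector
  have hv0 : v ≠ 0 := hv.2
  have hPv : (∑ i, P i) v = μ • v := hv.apply_eq_smul
  have havv : 0 < a v v := hpos v hv0
  obtain ⟨f, hf, hvf, hstab⟩ := hstable v
  have key : a v v = ∑ i, a (P i v) (f i) := by
    calc a v v = a v (∑ i, f i) := by rw [← hvf]
    _ = ∑ i, a v (f i) := by rw [map_sum]
    _ = ∑ i, a (P i v) (f i) := Finset.sum_congr rfl fun i _ =>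
        ((hproj i v).2 (f i) (hf i)).symm
  have sumP : ∑ i, a (P i v) (P i v) = μ * a v v := by
    calc ∑ i, a (P i v) (P i v) = ∑ i, a v (P i v) :=
        Finset.sum_congr rfl fun i _ => (hproj i v).2 (P i v) (hproj i v).1
    _ = a v ((∑ i, P i) v) := by rw [LinearMap.sum_apply, map_sum]
    _ = a v (μ • v) := by rw [hPv]
    _ = μ * a v v := by rw [map_smul]; rfl
  have hstep : a v v ≤ ∑ i, Real.sqrt (a (P i v) (P i v)) * Real.sqrt (a (f i) (f i)) := by
    rw [key]
    refine Finset.sum_le_sum fun i _ => ?_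
    have hc := a_cauchy a hsymm hpos (P i v) (f i)
    calc a (P i v) (f i) ≤ |a (P i v) (f i)| := le_abs_self _
    _ = Real.sqrt ((a (P i v) (f i)) ^ 2) := (Real.sqrt_sq_eq_abs _).symm
    _ ≤ Real.sqrt (a (P i v) (P i v) * a (f i) (f i)) := Real.sqrt_le_sqrt hc
    _ = Real.sqrt (a (P i v) (P i v)) * Real.sqrt (a (f i) (f i)) :=
        Real.sqrt_mul (a_nonneg a hpos _) _
  have h1 : (a v v) ^ 2 ≤ (∑ i, a (P i v) (P i v)) * (∑ i, a (f i) (f i)) := by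
    calc (a v v) ^ 2 ≤ (∑ i, Real.sqrt (a (P i v) (P i v)) * Real.sqrt (a (f i) (f i))) ^ 2 :=
        pow_le_pow_left₀ havv.le hstep 2
    _ ≤ (∑ i, (Real.sqrt (a (P i v) (P i v))) ^ 2) * (∑ i, (Real.sqrt (a (f i) (f i))) ^ 2) :=
        Finset.sum_mul_sq_le_sq_mul_sq _ _ _
    _ = (∑ i, a (P i v) (P i v)) * (∑ i, a (f i) (f i)) := by
        congr 1 <;> exact Finset.sum_congr rfl fun i _ => Real.sq_sqrt (a_nonneg a hpos _)
  rw [sumP] at h1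
  have hsum_nonneg : (0:ℝ) ≤ μ * a v v := by
    rw [← sumP]; exact Finset.sum_nonneg fun i _ => a_nonneg a hpos _
  have h2 : (a v v) ^ 2 ≤ (μ * a v v) * (C₀ * a v v) :=
    h1.trans (mul_le_mul_of_nonneg_left hstab hsum_nonneg)
  rw [div_le_iff₀ hC₀]
  nlinarith [h2, pow_pos havv 2]
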